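/- arXiv:2310.09954 — 9 statements merged into one kernel-verified Lean document; each statement's English description precedes it below -/
import Mathlib

section
/- Let g ≥ 3 and r ≥ 1 be integers. There exists an integer d with 2r ≤ d ≤ g−1 such that ρ(g,r,d) < 0, ρ(g,r,d+1) ≥ 0, and ρ(g,r−1,d−1) ≥ 0 (i.e., an expected maximal Brill–Noether locus of rank r exists) if and only if r ≤ ⌈√g − 1⌉ in case g ≥ ⌊√g⌋² + ⌊√g⌋, and r ≤ ⌊√g − 1⌋ in case g < ⌊√g⌋² + ⌊√g⌋. -/
noncomputable section

/-- The Brill--Noether number `ρ(g,r,d) = g - (r+1)(g-d+r)`. -/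
def rho (g r d : ℤ) : ℤ := g - (r + 1) * (g - d + r)

/-- Pflueger's Brill--Noether number `ρ_k(g,r,d)`, the maximum of
`ρ(g,r-ℓ,d) - ℓk` over integers `0 ≤ ℓ ≤ min r (g-d+r-1)`. -/
def rhoK (g r d k : ℤ) : ℤ :=
  sSup ((fun ℓ : ℤ => rho g (r - ℓ) d - ℓ * k) '' Set.Icc 0 (min r (g - d + r - 1)))

/-- `κ(g,r,d)`: the greatest integer `k ≥ 1` such that `ρ_k(g,r,d) ≥ 0`. -/
def kappa (g r d : ℤ) : ℤ := sSup {k : ℤ | 1 ≤ k ∧ 0 ≤ rhoK g r d k}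

/-- `d_max(g,r) = r + ⌈gr/(r+1)⌉ - 1`, the largest `d` with `ρ(g,r,d) < 0`. -/
def dmax (g r : ℤ) : ℤ := r + ⌈((g : ℚ) * r) / ((r : ℚ) + 1)⌉ - 1

-- LHS ↔ r(r+1) ≤ g
lemma lhs_iff (g r : ℤ) (hg : 3 ≤ g) (hr : 1 ≤ r) :
    (∃ d : ℤ, 2 * r ≤ d ∧ d ≤ g - 1 ∧ rho g r d < 0 ∧ 0 ≤ rho g r (d + 1) ∧
      0 ≤ rho g (r - 1) (d - 1)) ↔ r * (r + 1) ≤ g := by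
  constructor
  · rintro ⟨d, _, hd2, _, _, h5⟩
    have hs : r + 1 ≤ g - d + r := by linarith
    have h5' : 0 ≤ g - r * (g - d + r) := by
      have : rho g (r - 1) (d - 1) = g - r * (g - d + r) := by unfold rho; ring
      linarith [this ▸ h5]
    nlinarith [mul_le_mul_of_nonneg_left hs (by linarith : (0:ℤ) ≤ r)]
  · intro hrg
    set q := g / (r + 1) with hq
    have hr1 : (0:ℤ) < r + 1 := by linarith
    have hE : (r + 1) * q + g % (r + 1) = g := Int.mul_ediv_add_emod g (r + 1)
    have ht0 : 0 ≤ g % (r + 1) := Int.emod_nonneg g (by omega)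
    have ht1 : g % (r + 1) < r + 1 := Int.emod_lt_of_pos g hr1
    set t := g % (r + 1) with htdef
    -- r ≤ q
    have hrq : r ≤ q := by nlinarith [sq_nonneg (q - r)]
    refine ⟨g + r - 1 - q, ?_, by linarith, ?_, ?_, ?_⟩
    · -- 2r ≤ d  ⟺  q + r + 1 ≤ g
      rcases eq_or_lt_of_le hr with h1 | h2
      · subst h1; omega
      · nlinarith [mul_le_mul_of_nonneg_left hrq (by linarith : (0:ℤ) ≤ r), sq_nonneg (r - 1)]
    · unfold rho; nlinarith
    · unfold rho; nlinarith
    · unfold rho; nlinarith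

lemma rhs_iff (g r : ℤ) (hg : 3 ≤ g) (hr : 1 ≤ r) :
    (if ⌊Real.sqrt (g : ℝ)⌋ ^ 2 + ⌊Real.sqrt (g : ℝ)⌋ ≤ g then r ≤ ⌈Real.sqrt (g : ℝ) - 1⌉
      else r ≤ ⌊Real.sqrt (g : ℝ) - 1⌋) ↔ r * (r + 1) ≤ g := by
  have hg0 : (0:ℝ) ≤ (g:ℝ) := by exact_mod_cast (by linarith : (0:ℤ) ≤ g)
  set m : ℤ := ⌊Real.sqrt (g:ℝ)⌋ with hm
  have hm0 : 0 ≤ m := Int.floor_nonneg.mpr (Real.sqrt_nonneg _)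
  have h1 : (m:ℝ) ≤ Real.sqrt g := Int.floor_le _
  have h2 : Real.sqrt g < m + 1 := Int.lt_floor_add_one _
  have hm2 : m ^ 2 ≤ g := by
    have : (m:ℝ) * m ≤ Real.sqrt g * Real.sqrt g :=
      mul_le_mul h1 h1 (by exact_mod_cast hm0) (Real.sqrt_nonneg _)
    rw [Real.mul_self_sqrt hg0] at this
    have : ((m^2 : ℤ) : ℝ) ≤ (g:ℝ) := by push_cast; nlinarith
    exact_mod_cast this
  have hm3 : g < (m + 1) ^ 2 := by
    have : Real.sqrt g * Real.sqrt g < ((m:ℝ) + 1) * ((m:ℝ) + 1) :=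
      mul_self_lt_mul_self (Real.sqrt_nonneg _) h2
    rw [Real.mul_self_sqrt hg0] at this
    have : (g:ℝ) < (((m+1)^2 : ℤ) : ℝ) := by push_cast; nlinarith
    exact_mod_cast this
  have hfloor : ⌊Real.sqrt (g:ℝ) - 1⌋ = m - 1 := by
    rw [show (1:ℝ) = ((1:ℤ):ℝ) by norm_num, Int.floor_sub_intCast]
  by_cases hcase : m ^ 2 + m ≤ g
  · rw [if_pos hcase]
    have hmlt : (m:ℝ) < Real.sqrt g := by
      rcases lt_or_eq_of_le h1 with h | h
      · exact h
      · exfalso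
        have : (g:ℝ) = (m:ℝ) * m := by rw [← Real.mul_self_sqrt hg0, ← h]
        have : g = m ^ 2 := by exact_mod_cast (by push_cast; nlinarith : (g:ℝ) = ((m^2:ℤ):ℝ))
        nlinarith
    have hceil : ⌈Real.sqrt (g:ℝ) - 1⌉ = m := by
      rw [show Real.sqrt (g:ℝ) - 1 = Real.sqrt (g:ℝ) - ((1:ℤ):ℝ) by norm_num, Int.ceil_sub_intCast]
      have : ⌈Real.sqrt (g:ℝ)⌉ = m + 1 := by
        rw [Int.ceil_eq_iff]
        constructor
        · push_cast; linarith
        · push_cast; linarith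
      omega
    rw [hceil]
    constructor
    · intro hrm; nlinarith
    · intro hrg
      by_contra hcon
      push_neg at hcon
      nlinarith
  · rw [if_neg hcase, hfloor]
    push_neg at hcase
    constructor
    · intro hrm; nlinarith
    · intro hrg
      by_contra hcon
      push_neg at hcon
      nlinarith

theorem stmt0 (g r : ℤ) (hg : 3 ≤ g) (hr : 1 ≤ r) :
    (∃ d : ℤ, 2 * r ≤ d ∧ d ≤ g - 1 ∧ rho g r d < 0 ∧ 0 ≤ rho g r (d + 1) ∧
      0 ≤ rho g (r - 1) (d - 1)) ↔
    (if ⌊Real.sqrt (g : ℝ)⌋ ^ 2 + ⌊Real.sqrt (g : ℝ)⌋ ≤ g then r ≤ ⌈Real.sqrt (g : ℝ) - 1⌉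
      else r ≤ ⌊Real.sqrt (g : ℝ) - 1⌋) := by
  exact (lhs_iff g r hg hr).trans (rhs_iff g r hg hr).symm
end
end

section
/- Let g, r, d ≥ 1 be integers with d ≤ g − 1 and ρ(g,r,d) < 0. Then κ(g,r,d) = ⌊d/r⌋ if g + 1 > ⌊d/r⌋ + d, and κ(g,r,d) = g + 1 − γ(r,d) + ⌊−2√(−ρ(g,r,d))⌋ otherwise. -/
noncomputable section

lemma key_iff (g r d k ℓ : ℤ) (hℓ : 1 ≤ ℓ) :
    0 ≤ rho g (r - ℓ) d - ℓ * k ↔ k ≤ (g - d + 2*r + 1) - ℓ + (rho g r d) / ℓ := by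
  have hℓ0 : (0:ℤ) < ℓ := hℓ
  have hid : rho g (r - ℓ) d - ℓ * k
      = rho g r d - (ℓ - ((g - d + 2*r + 1) - k)) * ℓ := by unfold rho; ring
  rw [hid]
  have hiff := Int.le_ediv_iff_mul_le (a := ℓ - ((g - d + 2*r + 1) - k)) (b := rho g r d) hℓ0
  constructor
  · intro h
    have h2 := hiff.mpr (by linarith)
    linarith
  · intro h
    have h2 := hiff.mp (by linarith)
    linarith

lemma rhoK_nonneg_iff (g r d k : ℤ) (hr : 1 ≤ r) (hdg : d ≤ g - 1) (hrho : rho g r d < 0) :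
    0 ≤ rhoK g r d k ↔
      ∃ ℓ, 1 ≤ ℓ ∧ ℓ ≤ r ∧ k ≤ (g - d + 2*r + 1) - ℓ + (rho g r d) / ℓ := by
  have hmin : min r (g - d + r - 1) = r := by omega
  have hr0 : (0:ℤ) ≤ r := by omega
  set F : ℤ → ℤ := fun ℓ : ℤ => rho g (r - ℓ) d - ℓ * k with hF
  have hfin : (F '' Set.Icc 0 r).Finite := (Set.finite_Icc 0 r).image _
  have hne : (F '' Set.Icc 0 r).Nonempty :=
    ⟨F 0, Set.mem_image_of_mem _ (Set.mem_Icc.mpr ⟨le_refl 0, hr0⟩)⟩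
  unfold rhoK
  rw [hmin, ← hF]
  constructor
  · intro h
    obtain ⟨ℓ, hℓ, hval⟩ := hne.csSup_mem hfin
    rw [Set.mem_Icc] at hℓ
    have h0 : 0 ≤ F ℓ := by rw [hval]; exact h
    have hℓ1 : 1 ≤ ℓ := by
      rcases eq_or_lt_of_le hℓ.1 with h0' | h0'
      · exfalso
        rw [← h0'] at h0
        simp only [hF, sub_zero, zero_mul] at h0
        linarith
      · omega
    exact ⟨ℓ, hℓ1, hℓ.2, (key_iff g r d k ℓ hℓ1).mp h0⟩
  · rintro ⟨ℓ, h1, h2, h3⟩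
    have h0 : 0 ≤ F ℓ := (key_iff g r d k ℓ h1).mpr h3
    exact le_trans h0 (le_csSup hfin.bddAbove
      (Set.mem_image_of_mem _ (Set.mem_Icc.mpr ⟨by omega, h2⟩)))

lemma kappa_eq (g r d K : ℤ) (hr : 1 ≤ r) (hdg : d ≤ g - 1) (hrho : rho g r d < 0)
    (hK0 : 0 ≤ K)
    (hub : ∀ ℓ, 1 ≤ ℓ → ℓ ≤ r → (g - d + 2*r + 1) - ℓ + (rho g r d) / ℓ ≤ K)
    (hex : ∃ ℓ, 1 ≤ ℓ ∧ ℓ ≤ r ∧ K ≤ (g - d + 2*r + 1) - ℓ + (rho g r d) / ℓ) :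
    kappa g r d = K := by
  have hset : {k : ℤ | 1 ≤ k ∧ 0 ≤ rhoK g r d k} = Set.Icc 1 K := by
    ext k
    simp only [Set.mem_setOf_eq, Set.mem_Icc, rhoK_nonneg_iff g r d k hr hdg hrho]
    constructor
    · rintro ⟨h1, ℓ, hl1, hl2, hl3⟩
      exact ⟨h1, le_trans hl3 (hub ℓ hl1 hl2)⟩
    · rintro ⟨h1, h2⟩
      obtain ⟨ℓ, a, b, c⟩ := hex
      exact ⟨h1, ℓ, a, b, le_trans h2 c⟩
  unfold kappa
  rw [hset]
  rcases lt_or_ge K 1 with h | h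
  · rw [Set.Icc_eq_empty (by omega), Int.csSup_empty]; omega
  · exact csSup_Icc h

lemma case1_body (g r d : ℤ) (hg : 1 ≤ g) (hr : 1 ≤ r) (hd : 1 ≤ d)
    (hdg : d ≤ g - 1) (hrho : rho g r d < 0) (hcond : g + 1 > d / r + d) :
    0 ≤ d / r ∧
    (∀ ℓ, 1 ≤ ℓ → ℓ ≤ r → (g - d + 2*r + 1) - ℓ + (rho g r d) / ℓ ≤ d / r) ∧
    (∃ ℓ, 1 ≤ ℓ ∧ ℓ ≤ r ∧ d / r ≤ (g - d + 2*r + 1) - ℓ + (rho g r d) / ℓ) := by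
  have hr0 : (0:ℤ) < r := hr
  obtain ⟨q, e, hq, hdeq, he0, helt⟩ : ∃ q e : ℤ, q = d / r ∧ d = r * q + e ∧ 0 ≤ e ∧ e < r :=
    ⟨d / r, d % r, rfl, (Int.mul_ediv_add_emod d r).symm, Int.emod_nonneg d (by omega),
      Int.emod_lt_of_pos d hr0⟩
  rw [← hq] at hcond ⊢
  have hqgd : q ≤ g - d := by omega
  have hK0 : 0 ≤ q := hq ▸ Int.ediv_nonneg (by omega) (by omega)
  have hrho_eq : rho g r d = d - r*(g - d + r + 1) := by unfold rho; ring
  refine ⟨hK0, ?_, ?_⟩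
  · intro ℓ h1 h2
    by_contra hcon
    push_neg at hcon
    have h3 : q - (g - d + 2*r + 1) + ℓ + 1 ≤ rho g r d / ℓ := by
      have := Int.lt_iff_add_one_le.mp hcon; linarith
    have h4 := (Int.le_ediv_iff_mul_le (show (0:ℤ) < ℓ from h1)).mp h3
    nlinarith [mul_nonneg (sub_nonneg.mpr hqgd) (sub_nonneg.mpr h2), sq_nonneg (r - ℓ)]
  · refine ⟨r, hr, le_refl r, ?_⟩
    have h5 : rho g r d = e + (q - (g - d + r + 1)) * r := by rw [hrho_eq, hdeq]; ring
    have h6 : rho g r d / r = q - (g - d + r + 1) := by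
      rw [h5, Int.add_mul_ediv_right _ _ (by omega : r ≠ 0),
        Int.ediv_eq_zero_of_lt he0 helt, zero_add]
    rw [h6]; omega

lemma case2_body (g r d c : ℤ) (hg : 1 ≤ g) (hr : 1 ≤ r) (hd : 1 ≤ d)
    (hdg : d ≤ g - 1) (hrho : rho g r d < 0) (hc2 : 2 ≤ c) (hc2r : c ≤ 2*r)
    (h4p : 4 * (-(rho g r d)) ≤ c * c)
    (hc1 : (c-1)*(c-1) < 4 * (-(rho g r d))) :
    1 ≤ (g - d + 2*r + 1) - c ∧
    (∀ ℓ, 1 ≤ ℓ → ℓ ≤ r → (g - d + 2*r + 1) - ℓ + (rho g r d) / ℓ ≤ (g - d + 2*r + 1) - c) ∧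
    (∃ ℓ, 1 ≤ ℓ ∧ ℓ ≤ r ∧
      (g - d + 2*r + 1) - c ≤ (g - d + 2*r + 1) - ℓ + (rho g r d) / ℓ) := by
  refine ⟨by omega, ?_, ?_⟩
  · intro ℓ h1 h2
    by_contra hcon
    push_neg at hcon
    have h3 : ℓ - c + 1 ≤ rho g r d / ℓ := by
      have := Int.lt_iff_add_one_le.mp hcon; linarith
    have h4 := (Int.le_ediv_iff_mul_le (show (0:ℤ) < ℓ from h1)).mp h3
    nlinarith [sq_nonneg (c - 2*ℓ - 1)]
  · obtain ⟨l, b, hcb, hb0, hb2⟩ : ∃ l b : ℤ, c = 2*l + b ∧ 0 ≤ b ∧ b < 2 :=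
      ⟨c / 2, c % 2, by omega, Int.emod_nonneg c (by norm_num), Int.emod_lt_of_pos c (by norm_num)⟩
    have hl1 : 1 ≤ l := by omega
    have hlr : l ≤ r := by omega
    refine ⟨l, hl1, hlr, ?_⟩
    have key : 4*((c - l)*l) ≥ 4*(-(rho g r d)) - 1 := by
      rcases (by omega : b = 0 ∨ b = 1) with h | h <;> subst h <;> subst hcb <;> nlinarith [h4p]
    have key2 : -(rho g r d) ≤ (c - l)*l := by
      by_contra hk
      push_neg at hk
      have := Int.lt_iff_add_one_le.mp hk
      linarith
    have h7 : l - c ≤ rho g r d / l :=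
      (Int.le_ediv_iff_mul_le (show (0:ℤ) < l from hl1)).mpr (by nlinarith [key2])
    linarith

lemma cfacts (g r d : ℤ) (hg : 1 ≤ g) (hr : 1 ≤ r) (hd : 1 ≤ d)
    (hdg : d ≤ g - 1) (hrho : rho g r d < 0) (hcond : ¬ (g + 1 > d / r + d)) :
    2 ≤ ⌈(2:ℝ) * Real.sqrt ((-(rho g r d) : ℤ) : ℝ)⌉ ∧
    ⌈(2:ℝ) * Real.sqrt ((-(rho g r d) : ℤ) : ℝ)⌉ ≤ 2*r ∧
    4 * (-(rho g r d)) ≤ ⌈(2:ℝ) * Real.sqrt ((-(rho g r d) : ℤ) : ℝ)⌉ *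
      ⌈(2:ℝ) * Real.sqrt ((-(rho g r d) : ℤ) : ℝ)⌉ ∧
    (⌈(2:ℝ) * Real.sqrt ((-(rho g r d) : ℤ) : ℝ)⌉ - 1) *
      (⌈(2:ℝ) * Real.sqrt ((-(rho g r d) : ℤ) : ℝ)⌉ - 1) < 4 * (-(rho g r d)) := by
  have hr0 : (0:ℤ) < r := hr
  have hpr : -(rho g r d) ≤ r * r := by
    obtain ⟨q, e, hq, hdeq, he0, helt⟩ : ∃ q e : ℤ, q = d / r ∧ d = r * q + e ∧ 0 ≤ e ∧ e < r :=
      ⟨d / r, d % r, rfl, (Int.mul_ediv_add_emod d r).symm, Int.emod_nonneg d (by omega),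
        Int.emod_lt_of_pos d hr0⟩
    rw [← hq] at hcond
    have hqd : g - d + 1 ≤ q := by omega
    have hrho_eq : rho g r d = d - r*(g - d + r + 1) := by unfold rho; ring
    nlinarith [mul_le_mul_of_nonneg_left hqd (le_of_lt hr0)]
  set p : ℤ := -(rho g r d) with hp
  have hp1 : 1 ≤ p := by omega
  set c : ℤ := ⌈(2:ℝ) * Real.sqrt (p : ℝ)⌉ with hc
  have hx0 : (0:ℝ) ≤ (p:ℝ) := by exact_mod_cast (by omega : (0:ℤ) ≤ p)
  have hx1 : (1:ℝ) ≤ (p:ℝ) := by exact_mod_cast hp1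
  have hs1 : (1:ℝ) ≤ Real.sqrt (p:ℝ) := by
    rw [show (1:ℝ) = Real.sqrt 1 from Real.sqrt_one.symm]
    exact Real.sqrt_le_sqrt hx1
  have hcle : 2 * Real.sqrt (p:ℝ) ≤ (c:ℝ) := Int.le_ceil _
  have hclt : (c:ℝ) < 2 * Real.sqrt (p:ℝ) + 1 := Int.ceil_lt_add_one _
  have hc2 : 2 ≤ c := by exact_mod_cast (show (2:ℝ) ≤ (c:ℝ) by linarith)
  have hsr : Real.sqrt (p:ℝ) ≤ (r:ℝ) := by
    have h1 : ((p:ℤ):ℝ) ≤ ((r*r : ℤ):ℝ) := by exact_mod_cast hpr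
    have h2 := Real.sqrt_le_sqrt h1
    rwa [show ((r*r:ℤ):ℝ) = (r:ℝ)*(r:ℝ) by push_cast; ring,
      Real.sqrt_mul_self (by exact_mod_cast le_of_lt hr0)] at h2
  have hc2r : c ≤ 2*r := by
    apply Int.ceil_le.mpr
    push_cast
    linarith
  have h4p : 4 * p ≤ c * c := by
    have hR : (4:ℝ) * (p:ℝ) ≤ (c:ℝ) * (c:ℝ) := by
      nlinarith [Real.mul_self_sqrt hx0, Real.sqrt_nonneg ((p:ℤ):ℝ), hcle]
    exact_mod_cast hR
  have hc1 : (c-1) * (c-1) < 4*p := by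
    have hR : ((c:ℝ)-1) * ((c:ℝ)-1) < 4*(p:ℝ) := by
      have hc2' : (2:ℝ) ≤ (c:ℝ) := by exact_mod_cast hc2
      nlinarith [Real.mul_self_sqrt hx0, hclt, hs1]
    exact_mod_cast hR
  exact ⟨hc2, hc2r, h4p, hc1⟩

theorem stmt2 (g r d : ℤ) (hg : 1 ≤ g) (hr : 1 ≤ r) (hd : 1 ≤ d)
    (hdg : d ≤ g - 1) (hrho : rho g r d < 0) :
    kappa g r d =
      if g + 1 > d / r + d then d / r
      else g + 1 - (d - 2 * r) + ⌊(-2 : ℝ) * Real.sqrt ((-(rho g r d) : ℤ) : ℝ)⌋ := by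
  split_ifs with hcond
  · obtain ⟨hK0, hub, hex⟩ := case1_body g r d hg hr hd hdg hrho hcond
    exact kappa_eq g r d (d / r) hr hdg hrho hK0 hub hex
  · have hfloor : ⌊(-2 : ℝ) * Real.sqrt ((-(rho g r d) : ℤ) : ℝ)⌋
        = -⌈(2:ℝ) * Real.sqrt ((-(rho g r d) : ℤ) : ℝ)⌉ := by
      rw [show (-2 : ℝ) * Real.sqrt ((-(rho g r d) : ℤ) : ℝ)
          = -((2:ℝ) * Real.sqrt ((-(rho g r d) : ℤ) : ℝ)) by ring, Int.floor_neg]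
    rw [hfloor]
    obtain ⟨hc2, hc2r, h4p, hc1⟩ := cfacts g r d hg hr hd hdg hrho hcond
    obtain ⟨hK1, hub, hex⟩ := case2_body g r d _ hg hr hd hdg hrho hc2 hc2r h4p hc1
    have := kappa_eq g r d ((g - d + 2*r + 1) - ⌈(2:ℝ) * Real.sqrt ((-(rho g r d) : ℤ) : ℝ)⌉)
      hr hdg hrho (by omega) hub hex
    rw [this]
    ring
end
end

section
/- Let g, r, d, s, e be positive integers. If ρ(g,r,d) = ρ(g,s,e) and γ(r,d) = γ(s,e), then either (i) r = s and d = e, or (ii) s = g − d + r − 1 and e = 2g − 2 − d. -/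
noncomputable section

theorem stmt4 (g r d s e : ℤ) (hg : 1 ≤ g) (hr : 1 ≤ r) (hd : 1 ≤ d)
    (hs : 1 ≤ s) (he : 1 ≤ e)
    (h1 : rho g r d = rho g s e) (h2 : d - 2 * r = e - 2 * s) :
    (r = s ∧ d = e) ∨ (s = g - d + r - 1 ∧ e = 2 * g - 2 - d) := by
  unfold rho at h1
  have key : (r - s) * (g - d + r - s - 1) = 0 := by linear_combination -h1 + (s + 1) * h2
  rcases mul_eq_zero.mp key with h | h
  · left
    have hrs : r = s := by linarith
    exact ⟨hrs, by linarith [h2, hrs ▸ h2]⟩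
  · right
    constructor
    · linarith
    · linarith
end
end

section
/- Let g, r, d, s, e be positive integers with d ≤ g − 1, e ≤ g − 1, and ρ(g,r,d) = ρ(g,s,e) < 0. If g + 1 ≤ ⌊d/r⌋ + d, g + 1 ≤ ⌊e/s⌋ + e, and γ(r,d) < γ(s,e), then κ(g,r,d) > κ(g,s,e). -/
noncomputable section

/-- In the range `d ≤ g - 1`, the truncation `min r (g-d+r-1)` is just `r`. -/
lemma min_eq_r (g r d : ℤ) (hdg : d ≤ g - 1) : min r (g - d + r - 1) = r :=
  min_eq_left (by omega)

lemma rhoK_ge (g r d k ℓ : ℤ) (hdg : d ≤ g - 1) (h0 : 0 ≤ ℓ) (hℓ : ℓ ≤ r) :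
    rho g (r - ℓ) d - ℓ * k ≤ rhoK g r d k := by
  apply le_csSup ((Set.finite_Icc _ _).image _).bddAbove
  exact ⟨ℓ, by rw [min_eq_r g r d hdg]; exact ⟨h0, hℓ⟩, rfl⟩

lemma rhoK_exists (g r d k : ℤ) (hdg : d ≤ g - 1) (hr : 0 ≤ r) :
    ∃ ℓ, 0 ≤ ℓ ∧ ℓ ≤ r ∧ rhoK g r d k = rho g (r - ℓ) d - ℓ * k := by
  have hmem : rhoK g r d k ∈
      ((fun ℓ : ℤ => rho g (r - ℓ) d - ℓ * k) '' Set.Icc 0 (min r (g - d + r - 1))) := by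
    apply Set.Nonempty.csSup_mem
    · exact ⟨_, ⟨0, by rw [min_eq_r g r d hdg]; exact ⟨le_refl _, hr⟩, rfl⟩⟩
    · exact (Set.finite_Icc _ _).image _
  obtain ⟨ℓ, hℓ, heq⟩ := hmem
  rw [min_eq_r g r d hdg] at hℓ
  exact ⟨ℓ, hℓ.1, hℓ.2, heq.symm⟩

/-- monotonicity of `ℓ ↦ -ℓ + ρ/ℓ` past `r`, when `-r(r+1) ≤ ρ ≤ 0`. -/
lemma h_mono (ρ r : ℤ) (hr : 1 ≤ r) (hq : -(r * (r + 1)) ≤ ρ) :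
    ∀ ℓ, r ≤ ℓ → -ℓ + ρ / ℓ ≤ -r + ρ / r := by
  intro ℓ hℓ
  refine Int.le_induction (motive := fun ℓ _ => -ℓ + ρ / ℓ ≤ -r + ρ / r) (le_refl _) ?_ ℓ hℓ
  intro n hn ih
  have hstep' : -(n + 1) + ρ / (n + 1) ≤ -n + ρ / n := by
    have hn1 : 1 ≤ n := le_trans hr hn
    have hpos : (0:ℤ) < n := by omega
    have hq' : -(n * (n + 1)) ≤ ρ := by nlinarith
    -- show ρ / (n+1) ≤ ρ / n + 1
    have key : ρ / (n + 1) < ρ / n + 2 := by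
      rw [Int.ediv_lt_iff_lt_mul (by omega : (0:ℤ) < n + 1)]
      have h1 : n * (ρ / n) + ρ % n = ρ := Int.mul_ediv_add_emod ρ n
      have h2 : ρ % n < n := Int.emod_lt_of_pos ρ hpos
      have h3 : -(n + 1) ≤ ρ / n := by
        have := Int.ediv_le_ediv hpos hq'
        rwa [show -(n * (n + 1)) = n * (-(n+1)) by ring,
          Int.mul_ediv_cancel_left _ (by omega : n ≠ 0)] at this
      nlinarith
    omega
  linarith

theorem stmt5 (g r d s e : ℤ) (hg : 1 ≤ g) (hr : 1 ≤ r) (hd : 1 ≤ d)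
    (hs : 1 ≤ s) (he : 1 ≤ e) (hdg : d ≤ g - 1) (heg : e ≤ g - 1)
    (hrr : rho g r d = rho g s e) (hneg : rho g r d < 0)
    (h1 : g + 1 ≤ d / r + d) (h2 : g + 1 ≤ e / s + e)
    (h3 : d - 2 * r < e - 2 * s) :
    kappa g s e < kappa g r d := by
  set ρ := rho g r d with hρ
  have hrpos : (0:ℤ) < r := hr
  have hspos : (0:ℤ) < s := hs
  -- r * (d / r) ≤ d and similar
  have hdr : r * (d / r) ≤ d := by
    have := Int.mul_ediv_add_emod d r
    have := Int.emod_nonneg d (by omega : r ≠ 0)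
    omega
  have hes : s * (e / s) ≤ e := by
    have := Int.mul_ediv_add_emod e s
    have := Int.emod_nonneg e (by omega : s ≠ 0)
    omega
  -- from h1 : -(r*(r+1)) ≤ ρ
  have hq : -(r * (r + 1)) ≤ ρ := by
    have h1' : g + 1 - d ≤ d / r := by omega
    have : r * (g + 1 - d) ≤ r * (d / r) := by
      exact mul_le_mul_of_nonneg_left h1' (by omega)
    have hρd : ρ = g - (r + 1) * (g - d + r) := by rw [hρ, rho]
    nlinarith
  -- e ≥ 2 s
  have he2 : 2 * s ≤ e := by
    have h2' : (2:ℤ) ≤ e / s := by omega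
    have : s * 2 ≤ s * (e / s) := mul_le_mul_of_nonneg_left h2' (by omega)
    omega
  set Mr := g - d + 2 * r + 1 with hMr
  set Ms := g - e + 2 * s + 1 with hMs
  have hM : Ms + 1 ≤ Mr := by omega
  -- key: every k in the (s,e) set gives k+1 in the (r,d) set
  have key : ∀ k : ℤ, (1 ≤ k ∧ 0 ≤ rhoK g s e k) →
      (1 ≤ k + 1 ∧ 0 ≤ rhoK g r d (k + 1)) := by
    rintro k ⟨hk1, hk2⟩
    obtain ⟨ℓ, hℓ0, hℓs, heq⟩ := rhoK_exists g s e k heg (by omega)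
    have hval : rho g (s - ℓ) e - ℓ * k = rho g s e + ℓ * (Ms - ℓ) - ℓ * k := by
      rw [rho, rho, hMs]; ring
    rw [heq, hval, ← hrr] at hk2
    -- ℓ ≥ 1 since ρ < 0
    have hℓ1 : 1 ≤ ℓ := by
      rcases lt_or_ge 0 ℓ with h | h
      · omega
      · exfalso; have : ℓ = 0 := by omega
        rw [this] at hk2; simp at hk2; omega
    -- k ≤ Ms - ℓ + ρ / ℓ
    have hkle : k ≤ Ms - ℓ + ρ / ℓ := by
      have hmul : k * ℓ ≤ ρ + (Ms - ℓ) * ℓ := by nlinarith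
      have := (Int.le_ediv_iff_mul_le (by omega : (0:ℤ) < ℓ)).mpr hmul
      rw [Int.add_mul_ediv_right _ _ (by omega : ℓ ≠ 0)] at this
      linarith
    set ℓ₀ := min ℓ r with hℓ₀
    have hℓ₀1 : 1 ≤ ℓ₀ := le_min hℓ1 hr
    have hℓ₀r : ℓ₀ ≤ r := min_le_right _ _
    -- k ≤ Ms - ℓ₀ + ρ / ℓ₀
    have hkle0 : k ≤ Ms - ℓ₀ + ρ / ℓ₀ := by
      rcases le_or_gt ℓ r with h | h
      · rw [hℓ₀, min_eq_left h]; exact hkle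
      · have := h_mono ρ r hr hq ℓ (le_of_lt h)
        rw [hℓ₀, min_eq_right (le_of_lt h)]
        omega
    have hk1' : k + 1 ≤ Mr - ℓ₀ + ρ / ℓ₀ := by omega
    refine ⟨by omega, ?_⟩
    have hle := rhoK_ge g r d (k + 1) ℓ₀ hdg (by omega) hℓ₀r
    have hval' : rho g (r - ℓ₀) d - ℓ₀ * (k + 1) = ρ + ℓ₀ * (Mr - ℓ₀) - ℓ₀ * (k + 1) := by
      rw [hρ, rho, rho, hMr]; ring
    rw [hval'] at hle
    have hdm : ℓ₀ * (ρ / ℓ₀) + ρ % ℓ₀ = ρ := Int.mul_ediv_add_emod ρ ℓ₀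
    have hmn : 0 ≤ ρ % ℓ₀ := Int.emod_nonneg ρ (by omega)
    have : 0 ≤ ρ + ℓ₀ * (Mr - ℓ₀) - ℓ₀ * (k + 1) := by nlinarith
    omega
  -- nonemptiness of the (s,e) set
  have hne : (1:ℤ) ∈ {k : ℤ | 1 ≤ k ∧ 0 ≤ rhoK g s e k} := by
    refine ⟨le_refl _, ?_⟩
    have := rhoK_ge g s e 1 s heg (by omega) (le_refl s)
    have hv : rho g (s - s) e - s * 1 = e - s := by rw [rho]; ring
    rw [hv] at this; omega
  -- BddAbove of the (r,d) set
  have hbdd : BddAbove {k : ℤ | 1 ≤ k ∧ 0 ≤ rhoK g r d k} := by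
    refine ⟨Mr, ?_⟩
    rintro k ⟨hk1, hk2⟩
    obtain ⟨ℓ, hℓ0, hℓr, heq⟩ := rhoK_exists g r d k hdg (by omega)
    have hval : rho g (r - ℓ) d - ℓ * k = ρ + ℓ * (Mr - ℓ) - ℓ * k := by
      rw [hρ, rho, rho, hMr]; ring
    rw [heq, hval] at hk2
    have hℓ1 : 1 ≤ ℓ := by
      rcases lt_or_ge 0 ℓ with h | h
      · omega
      · exfalso; have : ℓ = 0 := by omega
        rw [this] at hk2; simp at hk2; omega
    have hexp : ℓ * (Mr - ℓ) = ℓ * Mr - ℓ * ℓ := by ring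
    have hlk : ℓ * k ≤ ℓ * Mr := by
      have := mul_self_nonneg ℓ
      linarith
    exact le_of_mul_le_mul_left hlk (by omega)
  -- conclude
  have hstep : kappa g s e ≤ kappa g r d - 1 := by
    apply csSup_le ⟨1, hne⟩
    intro k hk
    have hmem := key k hk
    have hk' : k + 1 ≤ kappa g r d := le_csSup hbdd hmem
    omega
  omega

end
end

section
/- Let g, r, d, s, e be positive integers with d ≤ g − 1, e ≤ g − 1, ρ(g,r,d) < 0, and ρ(g,s,e) = −1. If e − 2s > d − 2r + ⌈2√(−ρ(g,r,d))⌉ − 2 and g + 1 ≤ ⌊d/r⌋ + d, then κ(g,r,d) > κ(g,s,e). -/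
noncomputable section

lemma rho_shift (g r d ℓ : ℤ) :
    rho g (r - ℓ) d = rho g r d + ℓ * ((g - d + 2 * r + 1) - ℓ) := by
  unfold rho; ring

lemma rhoK_bddAbove (g r d k : ℤ) :
    BddAbove ((fun ℓ : ℤ => rho g (r - ℓ) d - ℓ * k) '' Set.Icc 0 (min r (g - d + r - 1))) :=
  ((Set.finite_Icc _ _).image _).bddAbove

lemma le_rhoK (g r d k ℓ : ℤ) (h0 : 0 ≤ ℓ) (h1 : ℓ ≤ min r (g - d + r - 1)) :
    rho g (r - ℓ) d - ℓ * k ≤ rhoK g r d k :=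
  le_csSup (rhoK_bddAbove g r d k) ⟨ℓ, ⟨h0, h1⟩, rfl⟩

lemma rhoK_attained (g r d k : ℤ) (h : 0 ≤ min r (g - d + r - 1)) :
    ∃ ℓ, 0 ≤ ℓ ∧ ℓ ≤ min r (g - d + r - 1) ∧ rhoK g r d k = rho g (r - ℓ) d - ℓ * k := by
  have hne : ((fun ℓ : ℤ => rho g (r - ℓ) d - ℓ * k) ''
      Set.Icc 0 (min r (g - d + r - 1))).Nonempty :=
    ⟨_, ⟨0, ⟨le_refl 0, h⟩, rfl⟩⟩
  obtain ⟨ℓ, hℓ, he⟩ := hne.csSup_mem ((Set.finite_Icc _ _).image _)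
  exact ⟨ℓ, hℓ.1, hℓ.2, he.symm⟩

lemma kappa_mem_le (g r d k : ℤ) (hr : 1 ≤ r) (hdg : d ≤ g - 1) (hneg : rho g r d < 0)
    (hk : k ∈ {k : ℤ | 1 ≤ k ∧ 0 ≤ rhoK g r d k}) : k ≤ g - d + 2 * r - 1 := by
  have hL : 0 ≤ min r (g - d + r - 1) := le_min (by linarith) (by linarith)
  obtain ⟨ℓ, h0, h1, heq⟩ := rhoK_attained g r d k hL
  have h2 : 0 ≤ rho g r d + ℓ * ((g - d + 2 * r + 1) - ℓ) - ℓ * k := by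
    rw [← rho_shift]; exact heq ▸ hk.2
  have hp : 1 ≤ ℓ * ((g - d + 2 * r + 1) - ℓ - k) := by nlinarith
  have hℓ0 : ℓ ≠ 0 := by rintro rfl; simp at hp
  have hℓ1 : 1 ≤ ℓ := lt_of_le_of_ne h0 (Ne.symm hℓ0)
  have h3 : 1 ≤ (g - d + 2 * r + 1) - ℓ - k := by nlinarith
  linarith

/-- The key arithmetic fact about integer square roots and ceilings. -/
lemma key_arith (n m C : ℤ) (hn : 1 ≤ n) (hm : 0 ≤ m)
    (h1 : m * m ≤ n) (h2 : n ≤ m * m + 2 * m)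
    (hC0 : 2 * m ≤ C) (hC1 : m * m < n → 2 * m + 1 ≤ C)
    (hC2 : 4 * m * m + 4 * m + 1 < 4 * n → 2 * m + 2 ≤ C) :
    n ≤ m * (C - m) := by
  rcases lt_or_ge (m * m) n with h | h
  · rcases lt_or_ge (m * m + m) n with h' | h'
    · have := hC2 (by linarith)
      nlinarith
    · have := hC1 h
      nlinarith
  · nlinarith

set_option maxHeartbeats 1000000 in
theorem stmt6 (g r d s e : ℤ) (hg : 1 ≤ g) (hr : 1 ≤ r) (hd : 1 ≤ d)
    (hs : 1 ≤ s) (he : 1 ≤ e) (hdg : d ≤ g - 1) (heg : e ≤ g - 1)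
    (hneg : rho g r d < 0) (hrho2 : rho g s e = -1)
    (h1 : d - 2 * r + ⌈(2 : ℝ) * Real.sqrt ((-(rho g r d) : ℤ) : ℝ)⌉ - 2 < e - 2 * s)
    (h2 : g + 1 ≤ d / r + d) :
    kappa g s e < kappa g r d := by
  set n : ℤ := -rho g r d with hn
  have hn1 : 1 ≤ n := by rw [hn]; linarith
  set C : ℤ := ⌈(2 : ℝ) * Real.sqrt ((n : ℤ) : ℝ)⌉ with hC
  set m : ℤ := ((n.toNat.sqrt : ℕ) : ℤ) with hm
  have hm0 : 0 ≤ m := Int.natCast_nonneg _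
  have hnn : ((n.toNat : ℤ)) = n := Int.toNat_of_nonneg (by linarith)
  have hmsq : m * m ≤ n := by
    have := Nat.sqrt_le' n.toNat
    have : ((n.toNat.sqrt ^ 2 : ℕ) : ℤ) ≤ ((n.toNat : ℤ)) := by exact_mod_cast this
    rw [hnn] at this; push_cast at this; nlinarith [this]
  have hmsq2 : n ≤ m * m + 2 * m := by
    have := Nat.lt_succ_sqrt' n.toNat
    have : ((n.toNat : ℤ)) < ((n.toNat.sqrt.succ ^ 2 : ℕ) : ℤ) := by exact_mod_cast this
    rw [hnn] at this; push_cast at this; nlinarith [this]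
  -- real sqrt bounds on C
  have hnR : (0 : ℝ) ≤ (n : ℝ) := by exact_mod_cast (by linarith : (0:ℤ) ≤ n)
  have hmR : (0 : ℝ) ≤ (m : ℝ) := by exact_mod_cast hm0
  have hC0 : 2 * m ≤ C := by
    have hms : (m : ℝ) ≤ Real.sqrt (n : ℝ) := by
      rw [Real.le_sqrt hmR hnR]
      have : (m * m : ℤ) ≤ n := hmsq
      have : ((m * m : ℤ) : ℝ) ≤ (n : ℝ) := by exact_mod_cast this
      push_cast at this; nlinarith
    have : ((2 * m : ℤ) : ℝ) ≤ (2 : ℝ) * Real.sqrt (n : ℝ) := by push_cast; linarith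
    exact_mod_cast this.trans (Int.le_ceil _)
  have hC1 : m * m < n → 2 * m + 1 ≤ C := by
    intro h
    have hms : (m : ℝ) < Real.sqrt (n : ℝ) := by
      rw [Real.lt_sqrt hmR]
      have : ((m * m : ℤ) : ℝ) < (n : ℝ) := by exact_mod_cast h
      push_cast at this; nlinarith
    have : (2 * m : ℤ) < C := by
      rw [hC, Int.lt_ceil]; push_cast; linarith
    linarith
  have hC2 : 4 * m * m + 4 * m + 1 < 4 * n → 2 * m + 2 ≤ C := by
    intro h
    have h4 : ((2 * m + 1 : ℤ) : ℝ) < 2 * Real.sqrt (n : ℝ) := by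
      have hsq : ((2 * m + 1 : ℤ) : ℝ) < Real.sqrt (4 * (n : ℝ)) := by
        rw [Real.lt_sqrt (by push_cast; linarith)]
        have : ((4 * m * m + 4 * m + 1 : ℤ) : ℝ) < ((4 * n : ℤ) : ℝ) := by exact_mod_cast h
        push_cast at this ⊢; nlinarith
      have h4n : Real.sqrt (4 * (n : ℝ)) = 2 * Real.sqrt (n : ℝ) := by
        rw [show (4 : ℝ) * (n : ℝ) = 2 ^ 2 * (n : ℝ) by norm_num,
          Real.sqrt_mul (by positivity), Real.sqrt_sq (by norm_num)]
      rwa [h4n] at hsq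
    have : (2 * m + 1 : ℤ) < C := by rw [hC, Int.lt_ceil]; exact h4
    linarith
  have hkey : n ≤ m * (C - m) := key_arith n m C hn1 hm0 hmsq hmsq2 hC0 hC1 hC2
  -- bounds on m
  have hdr : r * (d / r) ≤ d := by
    have h3 := Int.mul_ediv_add_emod d r
    have h4 := Int.emod_nonneg d (show r ≠ 0 by omega)
    linarith
  have hmr : m ≤ r := by
    have e1 : r * (g - d) ≤ r * (d / r - 1) :=
      mul_le_mul_of_nonneg_left (by linarith) (by linarith)
    have e2 : r * (g - d) ≤ d - r := by nlinarith
    have e3 : n ≤ r * r + 2 * r := by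
      have : n = (r + 1) * (g - d + r) - g := by rw [hn]; unfold rho; ring
      nlinarith
    by_contra hcon
    push_neg at hcon
    have h5 : (r + 1) * (r + 1) ≤ m * m :=
      mul_le_mul (by linarith) (by linarith) (by linarith) (by linarith)
    linarith [h5, hmsq, e3]
  have hmb : m ≤ g - d + r - 1 := by
    have hb : r + 1 ≤ g - d + r := by omega
    have e3 : n < (g - d + r) * (g - d + r) := by
      have : n = (r + 1) * (g - d + r) - g := by rw [hn]; unfold rho; ring
      nlinarith
    by_contra hcon
    push_neg at hcon
    have h5 : (g - d + r) * (g - d + r) ≤ m * m :=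
      mul_le_mul (by linarith) (by linarith) (by linarith) (by linarith)
    linarith
  -- K := g - d + 2r + 1 - C
  set K : ℤ := g - d + 2 * r + 1 - C with hK
  have hK3 : 3 ≤ K := by rw [hK]; linarith
  -- rhoK g r d K ≥ 0
  have hmem : 0 ≤ rhoK g r d K := by
    have hle := le_rhoK g r d K m hm0 (le_min hmr hmb)
    have : 0 ≤ rho g (r - m) d - m * K := by
      rw [rho_shift]
      have : rho g r d = -n := by rw [hn]; ring
      rw [this]; nlinarith
    linarith
  -- kappa g r d ≥ K
  have hbdd : BddAbove {k : ℤ | 1 ≤ k ∧ 0 ≤ rhoK g r d k} :=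
    ⟨g - d + 2 * r - 1, fun k hk => kappa_mem_le g r d k hr hdg hneg hk⟩
  have hlow : K ≤ kappa g r d := le_csSup hbdd ⟨by linarith, hmem⟩
  -- kappa g s e ≤ g - e + 2s - 1
  have hse_mem : (1 : ℤ) ∈ {k : ℤ | 1 ≤ k ∧ 0 ≤ rhoK g s e k} := by
    refine ⟨le_refl 1, ?_⟩
    have hle := le_rhoK g s e 1 1 (by norm_num) (le_min hs (by omega))
    have : 0 ≤ rho g (s - 1) e - 1 * 1 := by
      rw [rho_shift, hrho2]; omega
    linarith
  have hup : kappa g s e ≤ g - e + 2 * s - 1 :=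
    csSup_le ⟨1, hse_mem⟩ (fun k hk =>
      kappa_mem_le g s e k hs heg (by rw [hrho2]; norm_num) hk)
  omega

end
end

section
/- Let g, r ≥ 1 be integers with g ≥ r(r+1) (equivalently d_max(g,r) ≤ g − 1), and set d = d_max(g,r). Then (i) κ(g,r,d) ≤ g/(r+1) + r and (ii) κ(g,r,d) > g/(r+1) + r − 2√(r+1), where the inequalities are between real numbers. -/
noncomputable section

set_option maxHeartbeats 1000000 in
theorem stmt10 (g r : ℤ) (hg : 1 ≤ g) (hr : 1 ≤ r) (h : r * (r + 1) ≤ g) :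
    (kappa g r (dmax g r) : ℝ) ≤ (g : ℝ) / ((r : ℝ) + 1) + (r : ℝ) ∧
    (g : ℝ) / ((r : ℝ) + 1) + (r : ℝ) - 2 * Real.sqrt ((r : ℝ) + 1) <
      (kappa g r (dmax g r) : ℝ) := by
  set d := dmax g r with hd
  set m : ℤ := g / (r + 1) with hm
  set s : ℤ := g % (r + 1) with hs
  have hn0 : (0 : ℤ) < r + 1 := by omega
  have hdiv : (r + 1) * m + s = g := Int.mul_ediv_add_emod g (r + 1)
  have hs0 : 0 ≤ s := Int.emod_nonneg g (by omega)
  have hsn : s < r + 1 := Int.emod_lt_of_pos g hn0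
  have hmr : r ≤ m := (Int.le_ediv_iff_mul_le hn0).mpr h
  -- value of dmax
  have hrq : (1 : ℚ) ≤ (r : ℚ) := by exact_mod_cast hr
  have hdivq : ((r : ℚ) + 1) * (m : ℚ) + (s : ℚ) = (g : ℚ) := by exact_mod_cast hdiv
  have hsq0 : (0 : ℚ) ≤ (s : ℚ) := by exact_mod_cast hs0
  have hsnq : (s : ℚ) < (r : ℚ) + 1 := by exact_mod_cast hsn
  have hceil : ⌈((g : ℚ) * r) / ((r : ℚ) + 1)⌉ = g - m := by
    rw [Int.ceil_eq_iff]
    have hpos : (0 : ℚ) < (r : ℚ) + 1 := by linarith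
    constructor
    · rw [lt_div_iff₀ hpos]
      push_cast
      nlinarith
    · rw [div_le_iff₀ hpos]
      push_cast
      nlinarith
  have hdval : d = r + (g - m) - 1 := by rw [hd, dmax, hceil]
  have hmin : min r (g - d + r - 1) = r := by
    have : g - d + r - 1 = m := by omega
    rw [this, min_eq_left hmr]
  -- characterization of 0 ≤ rhoK
  have key : ∀ k : ℤ, 0 ≤ rhoK g r d k ↔
      ∃ ℓ : ℤ, 0 ≤ ℓ ∧ ℓ ≤ r ∧ 0 ≤ rho g (r - ℓ) d - ℓ * k := by
    intro k
    rw [rhoK, hmin]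
    have hfin : ((fun ℓ : ℤ => rho g (r - ℓ) d - ℓ * k) '' Set.Icc 0 r).Finite :=
      (Set.finite_Icc 0 r).image _
    have hne : ((fun ℓ : ℤ => rho g (r - ℓ) d - ℓ * k) '' Set.Icc 0 r).Nonempty :=
      ⟨_, Set.mem_image_of_mem _ (Set.mem_Icc.mpr ⟨le_refl 0, by omega⟩)⟩
    constructor
    · intro h0
      obtain ⟨ℓ, hℓ, hv⟩ := hne.csSup_mem hfin
      refine ⟨ℓ, (Set.mem_Icc.mp hℓ).1, (Set.mem_Icc.mp hℓ).2, ?_⟩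
      rw [← hv] at h0
      exact h0
    · rintro ⟨ℓ, h0, h1, h2⟩
      exact h2.trans (le_csSup hfin.bddAbove
        (Set.mem_image_of_mem _ (Set.mem_Icc.mpr ⟨h0, h1⟩)))
  -- explicit formula for the summand
  have hrho : ∀ ℓ k : ℤ, rho g (r - ℓ) d - ℓ * k
      = s - (r + 1) + ℓ * (m + r + 2 - k) - ℓ ^ 2 := by
    intro ℓ k
    have hg' : g = (r + 1) * m + s := by omega
    simp only [rho, hdval]
    linear_combination hg'
  -- every element of the kappa set is at most m + r
  have hub : ∀ k : ℤ, 1 ≤ k → 0 ≤ rhoK g r d k → k ≤ m + r := by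
    intro k hk1 hk
    obtain ⟨ℓ, hℓ0, hℓr, hpos⟩ := (key k).mp hk
    rw [hrho] at hpos
    by_contra hcon
    push_neg at hcon
    have hmul : ℓ * (m + r + 2 - k) ≤ ℓ * 1 :=
      mul_le_mul_of_nonneg_left (by omega) hℓ0
    nlinarith [sq_nonneg ℓ, sq_nonneg (ℓ - 1)]
  -- the square-root-like quantity
  set t : ℤ := r + 1 - s with ht
  have ht1 : 1 ≤ t := by omega
  set u : ℕ := (t - 1).toNat with hu
  have huz : (u : ℤ) = t - 1 := Int.toNat_of_nonneg (by omega)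
  set L : ℤ := (Nat.sqrt u : ℤ) + 1 with hL
  have hL1 : 1 ≤ L := by rw [hL]; omega
  have hLsq : t ≤ L * L := by
    have h2 : u < (u.sqrt + 1) * (u.sqrt + 1) := Nat.lt_succ_sqrt u
    have h2' : (u : ℤ) < ((u.sqrt : ℤ) + 1) * ((u.sqrt : ℤ) + 1) := by exact_mod_cast h2
    rw [hL]; nlinarith [h2', huz]
  have hLlow : (L - 1) * (L - 1) ≤ t - 1 := by
    have h3' : ((u.sqrt : ℤ)) ^ 2 ≤ (u : ℤ) := by exact_mod_cast Nat.sqrt_le' u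
    rw [hL]; nlinarith [h3', huz]
  have hpos : (0 : ℝ) < (r : ℝ) + 1 := by
    have : (1 : ℝ) ≤ (r : ℝ) := by exact_mod_cast hr
    linarith
  have hgr : (g : ℝ) = ((r : ℝ) + 1) * (m : ℝ) + (s : ℝ) := by exact_mod_cast hdiv.symm
  have hS0R : (0 : ℝ) ≤ (s : ℝ) := by exact_mod_cast hs0
  have hgdiv : (g : ℝ) / ((r : ℝ) + 1) = (m : ℝ) + (s : ℝ) / ((r : ℝ) + 1) := by
    rw [hgr]
    field_simp
  -- a good k₀
  obtain ⟨k₀, hk₀1, hk₀S, hk₀real⟩ :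
      ∃ k₀ : ℤ, 1 ≤ k₀ ∧ 0 ≤ rhoK g r d k₀ ∧
        (g : ℝ) / ((r : ℝ) + 1) + (r : ℝ) - 2 * Real.sqrt ((r : ℝ) + 1) < (k₀ : ℝ) := by
    by_cases hcase : L ≤ r
    · refine ⟨m + r + 2 - 2 * L, by omega, ?_, ?_⟩
      · refine (key _).mpr ⟨L, by omega, hcase, ?_⟩
        rw [hrho]
        nlinarith [hLsq]
      · set a : ℝ := Real.sqrt ((r : ℝ) + 1) with ha
        set b : ℝ := Real.sqrt ((t : ℝ) - 1) with hb
        have htR : (1 : ℝ) ≤ (t : ℝ) := by exact_mod_cast ht1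
        have ht0 : (0 : ℝ) ≤ (t : ℝ) - 1 := by linarith
        have ha2 : a ^ 2 = (r : ℝ) + 1 := Real.sq_sqrt (le_of_lt hpos)
        have hb2 : b ^ 2 = (t : ℝ) - 1 := Real.sq_sqrt ht0
        have ha0 : (0 : ℝ) ≤ a := Real.sqrt_nonneg _
        have hb0 : (0 : ℝ) ≤ b := Real.sqrt_nonneg _
        have hba : b ≤ a := by
          apply Real.sqrt_le_sqrt
          have : (t : ℝ) ≤ (r : ℝ) + 1 := by exact_mod_cast (by omega : t ≤ r + 1)
          linarith
        have hrR : (1 : ℝ) ≤ (r : ℝ) := by exact_mod_cast hr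
        have ha1 : (1 : ℝ) ≤ a := by nlinarith [ha2, ha0, hrR]
        have haN : a ≤ (r : ℝ) + 1 := by nlinarith [ha1, ha2]
        have hL1R : (0 : ℝ) ≤ (L : ℝ) - 1 := by
          have : (1 : ℝ) ≤ (L : ℝ) := by exact_mod_cast hL1
          linarith
        have hLb : (L : ℝ) - 1 ≤ b := by
          have h1 : ((L : ℝ) - 1) ^ 2 ≤ (t : ℝ) - 1 := by
            have := hLlow
            have h1' : ((L - 1) * (L - 1) : ℤ) ≤ (t - 1 : ℤ) := hLlow
            have h1'' : (((L : ℝ) - 1) * ((L : ℝ) - 1)) ≤ (t : ℝ) - 1 := by exact_mod_cast h1'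
            nlinarith [h1'']
          calc (L : ℝ) - 1 = Real.sqrt (((L : ℝ) - 1) ^ 2) := (Real.sqrt_sq hL1R).symm
            _ ≤ b := Real.sqrt_le_sqrt h1
        have hprod : (a + b) * (a - b) = (s : ℝ) + 1 := by
          have htR2 : (t : ℝ) = (r : ℝ) + 1 - (s : ℝ) := by exact_mod_cast ht
          have e : (a + b) * (a - b) = a ^ 2 - b ^ 2 := by ring
          rw [e, ha2, hb2, htR2]; ring
        have hsub : (0 : ℝ) ≤ a - b := by linarith
        have hab2 : a + b ≤ 2 * ((r : ℝ) + 1) := by linarith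
        have hmul2 : (a + b) * (a - b) ≤ 2 * ((r : ℝ) + 1) * (a - b) :=
          mul_le_mul_of_nonneg_right hab2 hsub
        have hkey2 : (s : ℝ) / ((r : ℝ) + 1) < 2 * (a - b) := by
          rw [div_lt_iff₀ hpos]
          nlinarith [hmul2, hprod]
        push_cast
        rw [hgdiv]
        linarith [hLb, hkey2]
    · push_neg at hcase
      have hrL : r ≤ L - 1 := by omega
      have h5 : r * r ≤ t - 1 :=
        le_trans (mul_le_mul hrL hrL (by omega) (by omega)) hLlow
      have hr1 : r = 1 := by
        have : r ≤ 1 := by nlinarith [h5, hs0, sq_nonneg (r - 1)]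
        omega
      have hs0' : s = 0 := by
        have h5' := h5
        rw [hr1] at h5'
        omega
      refine ⟨m, by omega, ?_, ?_⟩
      · refine (key m).mpr ⟨1, by omega, hr, ?_⟩
        rw [hrho]
        linarith [hs0]
      · subst hr1
        have hg2 : (g : ℝ) = 2 * (m : ℝ) := by exact_mod_cast (by omega : g = 2 * m)
        have hsqrt2 : (1 : ℝ) ≤ Real.sqrt ((1 : ℝ) + 1) := by
          rw [show ((1 : ℝ) + 1) = 2 by norm_num]
          rw [show (1 : ℝ) = Real.sqrt 1 from (Real.sqrt_one).symm]
          exact Real.sqrt_le_sqrt (by norm_num)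
        push_cast
        rw [hg2]
        have e : 2 * (m : ℝ) / (1 + 1) = (m : ℝ) := by ring
        rw [e]
        linarith [hsqrt2]
  -- bounds on kappa
  have hSbdd : BddAbove {k : ℤ | 1 ≤ k ∧ 0 ≤ rhoK g r d k} :=
    ⟨m + r, fun k hk => hub k hk.1 hk.2⟩
  have hSne : Set.Nonempty {k : ℤ | 1 ≤ k ∧ 0 ≤ rhoK g r d k} := ⟨k₀, hk₀1, hk₀S⟩
  have hkub : kappa g r d ≤ m + r := csSup_le hSne fun k hk => hub k hk.1 hk.2
  have hklb : k₀ ≤ kappa g r d := le_csSup hSbdd ⟨hk₀1, hk₀S⟩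
  constructor
  · have h1 : (kappa g r d : ℝ) ≤ (m : ℝ) + (r : ℝ) := by exact_mod_cast hkub
    have h2 : (m : ℝ) ≤ (g : ℝ) / ((r : ℝ) + 1) := by
      rw [hgdiv]
      have : (0 : ℝ) ≤ (s : ℝ) / ((r : ℝ) + 1) := div_nonneg hS0R (le_of_lt hpos)
      linarith
    linarith
  · have h3 : (k₀ : ℝ) ≤ (kappa g r d : ℝ) := by exact_mod_cast hklb
    linarith [hk₀real]
end
end

section
/- One has κ(20, 3, 17) = 6 and κ(20, 4, 19) = 5; in particular κ(20,3,17) > κ(20,4,19). -/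
noncomputable section

theorem stmt14 : kappa 20 3 17 = 6 ∧ kappa 20 4 19 = 5 ∧
    kappa 20 4 19 < kappa 20 3 17 := by
  have hb1 : ∀ k : ℤ, BddAbove ((fun ℓ : ℤ => rho 20 (3 - ℓ) 17 - ℓ * k) ''
      Set.Icc 0 (min 3 (20 - 17 + 3 - 1))) := fun k =>
    ((Set.finite_Icc _ _).image _).bddAbove
  have hb2 : ∀ k : ℤ, BddAbove ((fun ℓ : ℤ => rho 20 (4 - ℓ) 19 - ℓ * k) ''
      Set.Icc 0 (min 4 (20 - 19 + 4 - 1))) := fun k =>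
    ((Set.finite_Icc _ _).image _).bddAbove
  have h1 : kappa 20 3 17 = 6 := by
    apply IsGreatest.csSup_eq
    constructor
    · refine ⟨by norm_num, ?_⟩
      have : (0 : ℤ) ∈ (fun ℓ : ℤ => rho 20 (3 - ℓ) 17 - ℓ * 6) ''
          Set.Icc 0 (min 3 (20 - 17 + 3 - 1)) := by
        refine ⟨2, by norm_num, by norm_num [rho]⟩
      exact le_csSup (hb1 6) this
    · rintro k ⟨hk1, hk2⟩
      by_contra h
      push_neg at h
      have hk7 : 7 ≤ k := by omega
      have : rhoK 20 3 17 k ≤ -1 := by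
        apply csSup_le
        · exact ⟨rho 20 (3 - 0) 17 - 0 * k, 0, by norm_num, rfl⟩
        · rintro x ⟨ℓ, hℓ, rfl⟩
          simp only [Set.mem_Icc] at hℓ
          have hℓ2 : ℓ ≤ 3 := le_trans hℓ.2 (by norm_num)
          have hℓ1 := hℓ.1
          interval_cases ℓ <;> simp [rho] <;> omega
      simp only [rhoK] at hk2 this
      omega
  have h2 : kappa 20 4 19 = 5 := by
    apply IsGreatest.csSup_eq
    constructor
    · refine ⟨by norm_num, ?_⟩
      have : (1 : ℤ) ∈ (fun ℓ : ℤ => rho 20 (4 - ℓ) 19 - ℓ * 5) ''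
          Set.Icc 0 (min 4 (20 - 19 + 4 - 1)) := by
        refine ⟨3, by norm_num, by norm_num [rho]⟩
      exact le_trans (by norm_num) (le_csSup (hb2 5) this)
    · rintro k ⟨hk1, hk2⟩
      by_contra h
      push_neg at h
      have hk6 : 6 ≤ k := by omega
      have : rhoK 20 4 19 k ≤ -1 := by
        apply csSup_le
        · exact ⟨rho 20 (4 - 0) 19 - 0 * k, 0, by norm_num, rfl⟩
        · rintro x ⟨ℓ, hℓ, rfl⟩
          simp only [Set.mem_Icc] at hℓ
          have hℓ2 : ℓ ≤ 4 := le_trans hℓ.2 (by norm_num)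
          have hℓ1 := hℓ.1
          interval_cases ℓ <;> simp [rho] <;> omega
      simp only [rhoK] at hk2 this
      omega
  refine ⟨h1, h2, by rw [h1, h2]; norm_num⟩
end
end

section
/- Let g, s, e be positive integers with e ≤ g − 1 and ρ(g,s,e) = −1. Then κ(g,s,e) = g − 1 − γ(s,e) = g − 1 − (e − 2s). -/
noncomputable section

theorem stmt15 (g s e : ℤ) (hg : 1 ≤ g) (hs : 1 ≤ s) (he : 1 ≤ e)
    (heg : e ≤ g - 1) (hrho : rho g s e = -1) :
    kappa g s e = g - 1 - (e - 2 * s) := by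
  have key : (s + 1) * (g - e + s) = g + 1 := by
    unfold rho at hrho; linarith
  have hmin : min s (g - e + s - 1) = s := min_eq_left (by omega)
  have hval : ∀ ℓ : ℤ, rho g (s - ℓ) e = -1 + ℓ * (g - e + 2 * s + 1 - ℓ) := by
    intro ℓ
    unfold rho
    linear_combination (-1 : ℤ) * key
  have hbdd : ∀ k : ℤ, BddAbove
      ((fun ℓ : ℤ => rho g (s - ℓ) e - ℓ * k) '' Set.Icc 0 (min s (g - e + s - 1))) :=
    fun k => ((Set.finite_Icc _ _).image _).bddAbove
  have hset : {k : ℤ | 1 ≤ k ∧ 0 ≤ rhoK g s e k} = Set.Icc 1 (g - e + 2 * s - 1) := by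
    ext k
    simp only [Set.mem_setOf_eq, Set.mem_Icc]
    constructor
    · rintro ⟨hk1, hk2⟩
      refine ⟨hk1, ?_⟩
      by_contra h
      push_neg at h
      have hub : rhoK g s e k ≤ -1 := by
        apply csSup_le
        · exact ⟨rho g (s - 0) e - 0 * k, ⟨0, by rw [hmin]; constructor <;> omega, rfl⟩⟩
        · rintro x ⟨ℓ, hℓ, rfl⟩
          rw [hmin] at hℓ
          obtain ⟨hℓ0, hℓs⟩ := hℓ
          simp only
          rw [hval ℓ]
          rcases hℓ0.eq_or_lt with h0 | h0
          · subst h0; simp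
          · have h1 : 1 ≤ ℓ := h0
            nlinarith [mul_nonneg (by linarith : (0:ℤ) ≤ ℓ)
              (by linarith : (0:ℤ) ≤ k + ℓ - (g - e + 2 * s + 1))]
      linarith
    · rintro ⟨hk1, hk2⟩
      refine ⟨hk1, ?_⟩
      have hmem : rho g (s - 1) e - 1 * k ∈
          ((fun ℓ : ℤ => rho g (s - ℓ) e - ℓ * k) '' Set.Icc 0 (min s (g - e + s - 1))) :=
        ⟨1, by rw [hmin]; constructor <;> omega, rfl⟩
      have hle := le_csSup (hbdd k) hmem
      have h0 : 0 ≤ rho g (s - 1) e - 1 * k := by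
        rw [hval 1]; linarith
      unfold rhoK
      linarith
  rw [kappa, hset, csSup_Icc (by omega)]
  ring
end
end

section
/- Let g, r, d, s, e be positive integers with r ≥ 2, d ≤ g − 1, e ≤ g − 1, ρ(g,r,d) = −2, ρ(g,s,e) = −1, and e − 2s > d − 2r + 1. Then κ(g,r,d) > κ(g,s,e). -/
noncomputable section

/-- If `ρ(g,r,d) ∈ {-1,-2}` and the range of `ℓ` is nontrivial, then
`κ(g,r,d) = r + (g-d+r) + ρ(g,r,d)`. -/
lemma kappa_eq_s17 (g r d ρ₀ : ℤ) (hρ : rho g r d = ρ₀) (hρ2 : ρ₀ = -1 ∨ ρ₀ = -2)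
    (hL : 1 ≤ min r (g - d + r - 1)) (hK : 1 ≤ r + (g - d + r) + ρ₀) :
    kappa g r d = r + (g - d + r) + ρ₀ := by
  have hρ' : g - (r + 1) * (g - d + r) = ρ₀ := hρ
  set K := r + (g - d + r) + ρ₀ with hKdef
  have hset : {k : ℤ | 1 ≤ k ∧ 0 ≤ rhoK g r d k} = Set.Icc 1 K := by
    ext k
    simp only [Set.mem_setOf_eq, Set.mem_Icc]
    constructor
    · rintro ⟨hk1, hk2⟩
      refine ⟨hk1, ?_⟩
      by_contra h
      push_neg at h
      have hub : rhoK g r d k ≤ -1 := by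
        apply csSup_le
        · exact ⟨_, ⟨0, ⟨le_refl 0, by linarith⟩, rfl⟩⟩
        · rintro x ⟨ℓ, ⟨h0, hℓ⟩, rfl⟩
          simp only [rho]
          have hkK : K + 1 ≤ k := h
          have hfac : 0 ≤ ℓ * (k - (r + 1 + (g - d + r)) - ρ₀) := by
            apply mul_nonneg h0; rw [hKdef] at hkK; linarith
          rcases hρ2 with h1 | h1 <;> subst h1 <;>
            nlinarith [sq_nonneg ℓ, sq_nonneg (ℓ - 1)]
      linarith
    · rintro ⟨hk1, hk2⟩
      refine ⟨hk1, ?_⟩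
      have h1mem : (1 : ℤ) ∈ Set.Icc 0 (min r (g - d + r - 1)) := ⟨by norm_num, hL⟩
      have hbdd : BddAbove ((fun ℓ : ℤ => rho g (r - ℓ) d - ℓ * k) ''
          Set.Icc 0 (min r (g - d + r - 1))) :=
        ((Set.finite_Icc _ _).image _).bddAbove
      have hle := le_csSup hbdd (Set.mem_image_of_mem _ h1mem)
      have hval : rho g (r - 1) d - 1 * k = K - k := by
        simp only [rho, hKdef]; linear_combination hρ'
      rw [rhoK]
      rw [hval] at hle
      linarith
  rw [kappa, hset, csSup_Icc hK]

theorem stmt17 (g r d s e : ℤ) (hg : 1 ≤ g) (hr : 2 ≤ r) (hd : 1 ≤ d)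
    (hs : 1 ≤ s) (he : 1 ≤ e) (hdg : d ≤ g - 1) (heg : e ≤ g - 1)
    (h1 : rho g r d = -2) (h2 : rho g s e = -1)
    (h3 : d - 2 * r + 1 < e - 2 * s) :
    kappa g s e < kappa g r d := by
  have hwr : r + 1 ≤ g - d + r := by linarith
  have hws : s + 1 ≤ g - e + s := by linarith
  have k1 : kappa g r d = r + (g - d + r) + (-2) :=
    kappa_eq_s17 g r d (-2) h1 (Or.inr rfl)
      (le_min (by linarith) (by linarith)) (by linarith)
  have k2 : kappa g s e = s + (g - e + s) + (-1) :=
    kappa_eq_s17 g s e (-1) h2 (Or.inl rfl)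
      (le_min (by linarith) (by linarith)) (by linarith)
  rw [k1, k2]; linarith
end
end
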